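/- Let R be a commutative local ring and V a free R-module of rank 2m with a nondegenerate alternating bilinear form admitting a symplectic basis. Then the symplectic group Sp(V) is generated by symplectic transvections f_{a,v}(u) = u + a⟨v,u⟩v with a ∈ R and v a basis vector; in particular every symplectic transformation of V has determinant 1. -/

import Mathlib

variable {R V : Type*} [CommRing R] [AddCommGroup V] [Module R V]

/-- `v` is a basis vector of the free module `V` of rank `2m`. -/
def IsBasisVector (R : Type*) {V : Type*} [CommRing R] [AddCommGroup V] [Module R V]
    (m : ℕ) (v : V) : Prop :=
  ∃ (c : Module.Basis (Fin m ⊕ Fin m) R V) (i : Fin m ⊕ Fin m), c i = v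

/-- The symplectic transvection `f_{a,v} : u ↦ u + a ⟨v,u⟩ v`. -/
def sympTransvect (B : V →ₗ[R] V →ₗ[R] R) (a : R) (v : V) : Module.End R V :=
  LinearMap.id + LinearMap.smulRight (a • B v) v

/-- The set of invertible endomorphisms given by symplectic transvections `f_{a,v}`
with `a ∈ R` and `v` a basis vector. -/
def sympTransvSet (B : V →ₗ[R] V →ₗ[R] R) (m : ℕ) : Set (Module.End R V)ˣ :=
  {g | ∃ (a : R) (v : V), IsBasisVector R m v ∧
    (g : Module.End R V) = sympTransvect B a v}

lemma sympTransvect_apply (B : V →ₗ[R] V →ₗ[R] R) (a : R) (v u : V) :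
    sympTransvect B a v u = u + (a * B v u) • v := by
  simp [sympTransvect, smul_smul]

lemma skewB (B : V →ₗ[R] V →ₗ[R] R) (halt : ∀ x, B x x = 0) (x y : V) :
    B x y = - B y x := by
  have h := halt (x + y)
  simp [map_add, halt] at h
  linear_combination h

lemma sympTransvect_mul (B : V →ₗ[R] V →ₗ[R] R) (a a' : R) (v : V) (hv : B v v = 0) :
    sympTransvect B a v * sympTransvect B a' v = sympTransvect B (a + a') v := by
  ext u
  have h1 : B v (sympTransvect B a' v u) = B v u := by
    simp [sympTransvect_apply, hv]
  simp only [Module.End.mul_apply, sympTransvect_apply, map_add, map_smul, hv, smul_eq_mul,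
    mul_zero, add_zero, h1]
  module

lemma sympTransvect_zero (B : V →ₗ[R] V →ₗ[R] R) (v : V) :
    sympTransvect B 0 v = 1 := by
  ext u; simp [sympTransvect_apply]

/-- The transvection as a unit of the endomorphism ring. -/
def tvUnit (B : V →ₗ[R] V →ₗ[R] R) (a : R) (v : V) (hv : B v v = 0) :
    (Module.End R V)ˣ where
  val := sympTransvect B a v
  inv := sympTransvect B (-a) v
  val_inv := by rw [sympTransvect_mul B a (-a) v hv, add_neg_cancel, sympTransvect_zero]
  inv_val := by rw [sympTransvect_mul B (-a) a v hv, neg_add_cancel, sympTransvect_zero]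

lemma sympTransvect_preserves (B : V →ₗ[R] V →ₗ[R] R) (halt : ∀ x, B x x = 0)
    (a : R) (v x y : V) :
    B (sympTransvect B a v x) (sympTransvect B a v y) = B x y := by
  have hs := skewB B halt x v
  simp only [sympTransvect_apply, map_add, map_smul, LinearMap.add_apply, LinearMap.smul_apply,
    smul_eq_mul, halt v]
  ring_nf
  linear_combination (a * B v y) * hs

/-- The symplectic group as a subgroup of units. -/
def spGroup (B : V →ₗ[R] V →ₗ[R] R) : Subgroup (Module.End R V)ˣ where
  carrier := {g | ∀ x y, B ((g : Module.End R V) x) ((g : Module.End R V) y) = B x y}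
  one_mem' := by intro x y; simp
  mul_mem' := by
    intro g h hg hh x y
    simp only [Units.val_mul, Module.End.mul_apply]
    rw [hg, hh]
  inv_mem' := by
    intro g hg x y
    have h2 : ∀ z : V, (g : Module.End R V) (((g⁻¹ : (Module.End R V)ˣ) : Module.End R V) z) = z := by
      intro z
      rw [← Module.End.mul_apply, ← Units.val_mul, mul_inv_cancel, Units.val_one,
        Module.End.one_apply]
    conv_rhs => rw [← h2 x, ← h2 y]
    exact (hg _ _).symm ▸ rfl

lemma closure_le_sp (B : V →ₗ[R] V →ₗ[R] R) (halt : ∀ x, B x x = 0) {m : ℕ} :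
    Subgroup.closure (sympTransvSet B m) ≤ spGroup B := by
  rw [Subgroup.closure_le]
  rintro g ⟨a, v, -, hval⟩
  intro x y
  show B ((g : Module.End R V) x) ((g : Module.End R V) y) = B x y
  rw [hval]
  exact sympTransvect_preserves B halt a v x y

lemma memMaxOfNonunit [IsLocalRing R] {r : R} (hr : ¬IsUnit r) :
    r ∈ IsLocalRing.maximalIdeal R := by
  rw [IsLocalRing.mem_maximalIdeal, mem_nonunits_iff]; exact hr

lemma nonunitOfMemMax [IsLocalRing R] {r : R} (hr : r ∈ IsLocalRing.maximalIdeal R) :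
    ¬IsUnit r := by
  rw [IsLocalRing.mem_maximalIdeal, mem_nonunits_iff] at hr; exact hr

lemma nonunit_add_unit [IsLocalRing R] {r s : R} (hr : ¬IsUnit r) (hs : IsUnit s) :
    IsUnit (r + s) := by
  by_contra h
  apply nonunitOfMemMax (r := s) ?_ hs
  have := Ideal.sub_mem _ (memMaxOfNonunit h) (memMaxOfNonunit hr)
  simpa using this

lemma keyCoord [IsLocalRing R] {m : ℕ} (b : Module.Basis (Fin m ⊕ Fin m) R V)
    (φ : V →ₗ[R] R) (v : V) (h : IsUnit (φ v)) :
    ∃ j, IsUnit (b.repr v j) ∧ IsUnit (φ (b j)) := by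
  by_contra hc
  push_neg at hc
  have hv : φ v = ∑ j, b.repr v j * φ (b j) := by
    conv_lhs => rw [← b.sum_repr v]
    rw [map_sum]
    simp [smul_eq_mul]
  rw [hv] at h
  have hmem : (∑ j, b.repr v j * φ (b j)) ∈ IsLocalRing.maximalIdeal R := by
    refine Ideal.sum_mem _ fun j _ => ?_
    by_cases hj : IsUnit (b.repr v j)
    · exact Ideal.mul_mem_left _ _ (memMaxOfNonunit (hc j hj))
    · exact Ideal.mul_mem_right _ _ (memMaxOfNonunit hj)
  exact nonunitOfMemMax hmem h
lemma isBasisVector_of_isUnit_repr {m : ℕ} (b : Module.Basis (Fin m ⊕ Fin m) R V) {v : V}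
    (j : Fin m ⊕ Fin m) (h : IsUnit (b.repr v j)) : IsBasisVector R m v := by
  classical
  set w : Fin m ⊕ Fin m → V := Function.update (⇑b) j v with hw
  have hM : b.toMatrix w = Matrix.updateCol (1 : Matrix _ _ R) j ⇑(b.repr v) := by
    ext i j'
    rw [Module.Basis.toMatrix_apply]
    by_cases hj : j' = j
    · subst hj
      simp [hw, Matrix.updateCol_self]
    · simp [hw, Function.update_of_ne hj, Matrix.updateCol_ne hj, Matrix.one_apply,
        Module.Basis.repr_self, Finsupp.single_apply, eq_comm]
  have hdet : IsUnit (b.det w) := by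
    rw [Module.Basis.det_apply, hM, ← Matrix.cramer_apply, Matrix.cramer_one]
    simpa using h
  have hbasis := (Module.Basis.is_basis_iff_det b).mpr hdet
  refine ⟨Module.Basis.mk hbasis.1 hbasis.2.ge, j, ?_⟩
  rw [Module.Basis.mk_apply]
  simp [hw]

lemma repr_expand {ι : Type*} [Fintype ι] (b : Module.Basis ι R V) (φ : V →ₗ[R] R) (v : V) :
    φ v = ∑ j, b.repr v j * φ (b j) := by
  conv_lhs => rw [← b.sum_repr v]
  rw [map_sum]
  simp [smul_eq_mul]

lemma det_sympTransvect {m : ℕ} (b : Module.Basis (Fin m ⊕ Fin m) R V) (B : V →ₗ[R] V →ₗ[R] R)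
    (a : R) (v : V) (hv : B v v = 0) :
    LinearMap.det (sympTransvect B a v) = 1 := by
  classical
  rw [← LinearMap.det_toMatrix b]
  have hM : LinearMap.toMatrix b b (sympTransvect B a v)
      = 1 + Matrix.replicateCol Unit (⇑(b.repr v)) * Matrix.replicateRow Unit (fun j => a * B v (b j)) := by
    ext i j
    rw [LinearMap.toMatrix_apply, sympTransvect_apply]
    simp only [map_add, map_smul, Finsupp.coe_add, Finsupp.coe_smul, Pi.add_apply,
      Pi.smul_apply, smul_eq_mul, Matrix.add_apply, Matrix.mul_apply, Finset.univ_unique,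
      Finset.sum_singleton, Matrix.replicateCol_apply, Matrix.replicateRow_apply, Matrix.one_apply,
      Module.Basis.repr_self, Finsupp.single_apply]
    by_cases h : i = j
    · subst h; simp; ring
    · rw [if_neg h, if_neg (fun hh => h hh.symm)]; ring
  rw [hM, Matrix.det_one_add_replicateCol_mul_replicateRow]
  have h2 := repr_expand b (B v) v
  simp only [dotProduct]
  have h3 : ∑ j, a * B v (b j) * b.repr v j = a * ∑ j, b.repr v j * B v (b j) := by
    rw [Finset.mul_sum]
    exact Finset.sum_congr rfl fun j _ => by ring
  rw [h3, ← h2, hv, mul_zero, add_zero]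

/-- Any vector pairing to a unit against something is a basis vector. -/
lemma isBasisVector_of_pairing [IsLocalRing R] {m : ℕ} (b : Module.Basis (Fin m ⊕ Fin m) R V)
    (B : V →ₗ[R] V →ₗ[R] R) {u v : V} (h : IsUnit (B u v)) : IsBasisVector R m v := by
  obtain ⟨j, hj, -⟩ := keyCoord b (B u) v h
  exact isBasisVector_of_isUnit_repr b j hj

/-- One transvection moving `u` to `x`. -/
lemma step [IsLocalRing R] {m : ℕ} (B : V →ₗ[R] V →ₗ[R] R) (halt : ∀ x, B x x = 0)
    (b : Module.Basis (Fin m ⊕ Fin m) R V) {u x : V} (hux : IsUnit (B x u)) :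
    ∃ t : (Module.End R V)ˣ, t ∈ Subgroup.closure (sympTransvSet B m) ∧
      (t : Module.End R V) u = x ∧
      ∀ w, B (x - u) w = 0 → (t : Module.End R V) w = w := by
  obtain ⟨c, hc⟩ := hux.exists_left_inv
  have hxu : B (x - u) u = B x u := by
    rw [map_sub, LinearMap.sub_apply, halt u, sub_zero]
  have hbv : IsBasisVector R m (x - u) := by
    apply isBasisVector_of_pairing b B (u := u)
    have : B u (x - u) = - B (x - u) u := skewB B halt _ _
    rw [this, hxu]
    exact hux.neg
  refine ⟨tvUnit B c (x - u) (halt _), ?_, ?_, ?_⟩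
  · exact Subgroup.subset_closure ⟨c, x - u, hbv, rfl⟩
  · show sympTransvect B c (x - u) u = x
    rw [sympTransvect_apply, hxu, hc, one_smul, add_sub_cancel]
  · intro w hw
    show sympTransvect B c (x - u) w = w
    rw [sympTransvect_apply, hw, mul_zero, zero_smul, add_zero]

/-- Two transvections moving `u` to `x` via `z`. -/
lemma step2 [IsLocalRing R] {m : ℕ} (B : V →ₗ[R] V →ₗ[R] R) (halt : ∀ x, B x x = 0)
    (b : Module.Basis (Fin m ⊕ Fin m) R V) {u x z : V} (h1 : IsUnit (B z u)) (h2 : IsUnit (B x z)) :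
    ∃ t : (Module.End R V)ˣ, t ∈ Subgroup.closure (sympTransvSet B m) ∧
      (t : Module.End R V) u = x ∧
      ∀ w, B (z - u) w = 0 → B (x - z) w = 0 → (t : Module.End R V) w = w := by
  obtain ⟨t₁, ht₁, ht₁u, ht₁f⟩ := step B halt b h1
  obtain ⟨t₂, ht₂, ht₂u, ht₂f⟩ := step B halt b h2
  refine ⟨t₂ * t₁, mul_mem ht₂ ht₁, ?_, ?_⟩
  · rw [Units.val_mul, Module.End.mul_apply, ht₁u, ht₂u]
  · intro w hw1 hw2
    rw [Units.val_mul, Module.End.mul_apply, ht₁f w hw1, ht₂f w hw2]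

lemma unit_inv_apply (u : (Module.End R V)ˣ) (v : V) :
    ((u⁻¹ : (Module.End R V)ˣ) : Module.End R V) ((u : Module.End R V) v) = v := by
  rw [← Module.End.mul_apply, ← Units.val_mul, inv_mul_cancel, Units.val_one, Module.End.one_apply]

lemma mainInd [IsLocalRing R] {m : ℕ} (B : V →ₗ[R] V →ₗ[R] R)
    (halt : ∀ x, B x x = 0)
    (b : Module.Basis (Fin m ⊕ Fin m) R V)
    (hb1 : ∀ i j, B (b (.inl i)) (b (.inr j)) = if i = j then 1 else 0)
    (hb2 : ∀ i j, B (b (.inl i)) (b (.inl j)) = 0)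
    (hb3 : ∀ i j, B (b (.inr i)) (b (.inr j)) = 0)
    (k : ℕ) :
    ∀ g : (Module.End R V)ˣ, g ∈ spGroup B →
      (∀ i : Fin m, k ≤ (i : ℕ) →
        (g : Module.End R V) (b (.inl i)) = b (.inl i) ∧
        (g : Module.End R V) (b (.inr i)) = b (.inr i)) →
      g ∈ Subgroup.closure (sympTransvSet B m) := by
  have hskew : ∀ p q : V, B p q = - B q p := skewB B halt
  induction k with
  | zero =>
    intro g hg hfix
    have hval : (g : Module.End R V) = 1 := by
      apply b.ext
      rintro (i | i)
      · simpa using (hfix i (Nat.zero_le _)).1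
      · simpa using (hfix i (Nat.zero_le _)).2
    have : g = 1 := Units.ext hval
    rw [this]
    exact one_mem _
  | succ k IH =>
    intro g hg hfix
    by_cases hkm : m ≤ k
    · exact IH g hg (fun i _ => hfix i (by omega))
    push_neg at hkm
    set κ : Fin m := ⟨k, hkm⟩ with hκ
    set e := b (.inl κ) with he
    set f := b (.inr κ) with hf
    have hg' : ∀ x y, B ((g : Module.End R V) x) ((g : Module.End R V) y) = B x y := hg
    have hef : B e f = 1 := by rw [he, hf, hb1]; simp
    have hfe : B f e = -1 := by rw [hskew, hef]
    -- the predicate of being orthogonal to all later basis pairs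
    set P : V → Prop := fun w => ∀ i : Fin m, k < (i : ℕ) →
      B (b (.inl i)) w = 0 ∧ B (b (.inr i)) w = 0 with hP
    have hPe : P e := by
      intro i hi
      have hik : κ ≠ i := by
        intro h; rw [← h] at hi; simp [hκ] at hi
      refine ⟨hb2 i κ, ?_⟩
      rw [he, hskew, hb1, if_neg hik, neg_zero]
    have hPf : P f := by
      intro i hi
      have hik : i ≠ κ := by
        intro h; rw [h] at hi; simp [hκ] at hi
      refine ⟨?_, hb3 i κ⟩
      rw [hf, hb1, if_neg hik]
    have hPadd : ∀ p q, P p → P q → P (p + q) := by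
      intro p q hp hq i hi
      constructor <;> rw [map_add] <;>
        simp [(hp i hi).1, (hq i hi).1, (hp i hi).2, (hq i hi).2]
    -- images of e and f under g
    set x := (g : Module.End R V) e with hx
    set y := (g : Module.End R V) f with hy
    have hBxy : B x y = 1 := by rw [hx, hy, hg', hef]
    have hPg : ∀ w : V, P w → P ((g : Module.End R V) w) := by
      intro w hw i hi
      have h1 := hg' (b (.inl i)) w
      have h2 := hg' (b (.inr i)) w
      rw [(hfix i (by omega)).1] at h1
      rw [(hfix i (by omega)).2] at h2
      rw [h1, h2]
      exact hw i hi
    have hPx : P x := hPg e hPe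
    have hPy : P y := hPg f hPf
    -- difference of two P-vectors is B-orthogonal to all later basis vectors
    have hfixgen : ∀ p q : V, P p → P q → ∀ i : Fin m, k < (i : ℕ) →
        B (p - q) (b (.inl i)) = 0 ∧ B (p - q) (b (.inr i)) = 0 := by
      intro p q hp hq i hi
      constructor <;> rw [hskew, map_sub]
      · rw [(hp i hi).1, (hq i hi).1, sub_zero, neg_zero]
      · rw [(hp i hi).2, (hq i hi).2, sub_zero, neg_zero]
    -- Stage 1 : a product of transvections sending `e` to `x` fixing later pairs
    have stage1 : ∃ t : (Module.End R V)ˣ, t ∈ Subgroup.closure (sympTransvSet B m) ∧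
        (t : Module.End R V) e = x ∧ ∀ i : Fin m, k < (i : ℕ) →
          (t : Module.End R V) (b (.inl i)) = b (.inl i) ∧
          (t : Module.End R V) (b (.inr i)) = b (.inr i) := by
      by_cases h1 : IsUnit (B x e)
      · obtain ⟨t, htG, htu, htf⟩ := step B halt b h1
        exact ⟨t, htG, htu, fun i hi =>
          ⟨htf _ (hfixgen x e hPx hPe i hi).1, htf _ (hfixgen x e hPx hPe i hi).2⟩⟩
      · obtain ⟨z, hz1, hz2, hPz⟩ : ∃ z, IsUnit (B z e) ∧ IsUnit (B x z) ∧ P z := by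
          by_cases h2 : IsUnit (B x f)
          · exact ⟨f, by rw [hfe]; exact isUnit_one.neg, h2, hPf⟩
          · have hyx : IsUnit (B y x) := by
              rw [hskew, hBxy]; exact isUnit_one.neg
            obtain ⟨j, -, hj⟩ := keyCoord b (B.flip x) y hyx
            rw [LinearMap.flip_apply] at hj
            -- hj : IsUnit (B (b j) x)
            have hwprop : B (b j) e = 0 ∧ P (b j) := by
              rcases j with i | i
              · have hik : ¬ k < (i : ℕ) := by
                  intro hi
                  rw [(hPx i hi).1] at hj
                  exact not_isUnit_zero hj
                refine ⟨hb2 i κ, fun i' hi' => ⟨hb2 i' i, ?_⟩⟩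
                have : i ≠ i' := by intro h; rw [h] at hik; omega
                rw [hskew, hb1, if_neg this, neg_zero]
              · have hik : ¬ k < (i : ℕ) := by
                  intro hi
                  rw [(hPx i hi).2] at hj
                  exact not_isUnit_zero hj
                have hiκ : i ≠ κ := by
                  intro h
                  rw [h, ← hf] at hj
                  apply h2
                  have := hskew f x
                  rw [this] at hj
                  simpa using hj.neg
                refine ⟨?_, fun i' hi' => ⟨?_, hb3 i' i⟩⟩
                · rw [he, hskew, hb1, if_neg (fun h => hiκ h.symm), neg_zero]
                · have : i' ≠ i := by intro h; rw [h] at hi'; omega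
                  rw [hb1, if_neg this]
            refine ⟨f + b j, ?_, ?_, hPadd f (b j) hPf hwprop.2⟩
            · rw [map_add, LinearMap.add_apply, hfe, hwprop.1, add_zero]
              exact isUnit_one.neg
            · rw [map_add]
              have hxw : IsUnit (B x (b j)) := by
                rw [hskew]; exact hj.neg
              exact nonunit_add_unit h2 hxw
        obtain ⟨t, htG, htu, htf⟩ := step2 B halt b hz1 hz2
        refine ⟨t, htG, htu, fun i hi => ?_⟩
        exact ⟨htf _ (hfixgen z e hPz hPe i hi).1 (hfixgen x z hPx hPz i hi).1,
          htf _ (hfixgen z e hPz hPe i hi).2 (hfixgen x z hPx hPz i hi).2⟩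
    obtain ⟨t₁, ht₁G, ht₁e, ht₁fix⟩ := stage1
    -- pass to g₁ = t₁⁻¹ g which fixes e
    set g₁ : (Module.End R V)ˣ := t₁⁻¹ * g with hg₁def
    have hg₁sp : g₁ ∈ spGroup B :=
      mul_mem (inv_mem (closure_le_sp B halt ht₁G)) hg
    have hg₁' : ∀ x y, B ((g₁ : Module.End R V) x) ((g₁ : Module.End R V) y) = B x y := hg₁sp
    have hg₁e : (g₁ : Module.End R V) e = e := by
      rw [hg₁def, Units.val_mul, Module.End.mul_apply, ← hx, ← ht₁e, unit_inv_apply]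
    have hg₁fix : ∀ i : Fin m, k < (i : ℕ) →
        (g₁ : Module.End R V) (b (.inl i)) = b (.inl i) ∧
        (g₁ : Module.End R V) (b (.inr i)) = b (.inr i) := by
      intro i hi
      constructor <;> rw [hg₁def, Units.val_mul, Module.End.mul_apply]
      · rw [(hfix i (by omega)).1]
        conv_lhs => rw [← (ht₁fix i hi).1]
        rw [unit_inv_apply]
      · rw [(hfix i (by omega)).2]
        conv_lhs => rw [← (ht₁fix i hi).2]
        rw [unit_inv_apply]
    set y₁ := (g₁ : Module.End R V) f with hy₁
    have hBey₁ : B e y₁ = 1 := by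
      have := hg₁' e f
      rw [hg₁e] at this
      rw [hy₁, this, hef]
    have hy₁e : B y₁ e = -1 := by rw [hskew, hBey₁]
    have hPy₁ : P y₁ := by
      intro i hi
      have h1 := hg₁' (b (.inl i)) f
      have h2 := hg₁' (b (.inr i)) f
      rw [(hg₁fix i hi).1] at h1
      rw [(hg₁fix i hi).2] at h2
      rw [hy₁, h1, h2]
      exact hPf i hi
    -- Stage 2 : a product of transvections sending f to y₁ fixing e and later pairs
    have stage2 : ∃ t : (Module.End R V)ˣ, t ∈ Subgroup.closure (sympTransvSet B m) ∧
        (t : Module.End R V) f = y₁ ∧ (t : Module.End R V) e = e ∧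
        ∀ i : Fin m, k < (i : ℕ) →
          (t : Module.End R V) (b (.inl i)) = b (.inl i) ∧
          (t : Module.End R V) (b (.inr i)) = b (.inr i) := by
      by_cases h2 : IsUnit (B y₁ f)
      · obtain ⟨t, htG, htu, htf⟩ := step B halt b h2
        refine ⟨t, htG, htu, ?_, fun i hi =>
          ⟨htf _ (hfixgen y₁ f hPy₁ hPf i hi).1, htf _ (hfixgen y₁ f hPy₁ hPf i hi).2⟩⟩
        apply htf
        rw [map_sub, LinearMap.sub_apply, hy₁e, hfe]
        ring
      · have hz1 : IsUnit (B (e + f) f) := by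
          rw [map_add, LinearMap.add_apply, hef, halt f, add_zero]
          exact isUnit_one
        have hz2 : IsUnit (B y₁ (e + f)) := by
          rw [map_add, add_comm]
          exact nonunit_add_unit h2 (by rw [hy₁e]; exact isUnit_one.neg)
        obtain ⟨t, htG, htu, htf⟩ := step2 B halt b hz1 hz2
        have hPef : P (e + f) := hPadd e f hPe hPf
        refine ⟨t, htG, htu, ?_, fun i hi =>
          ⟨htf _ (hfixgen (e + f) f hPef hPf i hi).1 (hfixgen y₁ (e + f) hPy₁ hPef i hi).1,
           htf _ (hfixgen (e + f) f hPef hPf i hi).2 (hfixgen y₁ (e + f) hPy₁ hPef i hi).2⟩⟩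
        apply htf
        · rw [map_sub, LinearMap.sub_apply, map_add, LinearMap.add_apply, halt e, hfe]
          ring
        · rw [map_sub, LinearMap.sub_apply, hy₁e, map_add, LinearMap.add_apply, halt e, hfe]
          ring
    obtain ⟨t₂, ht₂G, ht₂f, ht₂e, ht₂fix⟩ := stage2
    set g₂ : (Module.End R V)ˣ := t₂⁻¹ * g₁ with hg₂def
    have hg₂sp : g₂ ∈ spGroup B :=
      mul_mem (inv_mem (closure_le_sp B halt ht₂G)) hg₁sp
    have hg₂fix : ∀ i : Fin m, k ≤ (i : ℕ) →
        (g₂ : Module.End R V) (b (.inl i)) = b (.inl i) ∧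
        (g₂ : Module.End R V) (b (.inr i)) = b (.inr i) := by
      intro i hi
      rcases eq_or_lt_of_le hi with hik | hik
      · have : i = κ := by apply Fin.ext; simp [hκ, ← hik]
        subst this
        constructor <;> rw [hg₂def, Units.val_mul, Module.End.mul_apply]
        · rw [← he, hg₁e]
          conv_lhs => rw [← ht₂e]
          rw [unit_inv_apply]
        · rw [← hf, ← hy₁]
          conv_lhs => rw [← ht₂f]
          rw [unit_inv_apply]
      · constructor <;> rw [hg₂def, Units.val_mul, Module.End.mul_apply]
        · rw [(hg₁fix i hik).1]
          conv_lhs => rw [← (ht₂fix i hik).1]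
          rw [unit_inv_apply]
        · rw [(hg₁fix i hik).2]
          conv_lhs => rw [← (ht₂fix i hik).2]
          rw [unit_inv_apply]
    have hg₂mem := IH g₂ hg₂sp hg₂fix
    have hgeq : g = t₁ * (t₂ * g₂) := by
      rw [hg₂def, hg₁def]
      group
    rw [hgeq]
    exact mul_mem ht₁G (mul_mem ht₂G hg₂mem)

/-- over a commutative local ring `R`, the symplectic group `Sp(V)` of a
nondegenerate alternating form admitting a symplectic basis is generated by the
symplectic transvections `f_{a,v}` with `v` a basis vector; in particular every
symplectic transformation has determinant `1`. -/
theorem stmt16 [IsLocalRing R] {m : ℕ}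
    (B : V →ₗ[R] V →ₗ[R] R)
    (halt : ∀ x, B x x = 0)
    (hnd : ∀ x, (∀ y, B x y = 0) → x = 0)
    (b : Module.Basis (Fin m ⊕ Fin m) R V)
    (hb1 : ∀ i j, B (b (.inl i)) (b (.inr j)) = if i = j then 1 else 0)
    (hb2 : ∀ i j, B (b (.inl i)) (b (.inl j)) = 0)
    (hb3 : ∀ i j, B (b (.inr i)) (b (.inr j)) = 0)
    (g : (Module.End R V)ˣ) :
    ((∀ x y, B ((g : Module.End R V) x) ((g : Module.End R V) y) = B x y) ↔
        g ∈ Subgroup.closure (sympTransvSet B m)) ∧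
    ((∀ x y, B ((g : Module.End R V) x) ((g : Module.End R V) y) = B x y) →
        LinearMap.det (g : Module.End R V) = 1) := by
  have hdet : ∀ u : (Module.End R V)ˣ, u ∈ Subgroup.closure (sympTransvSet B m) →
      LinearMap.det (u : Module.End R V) = 1 := by
    intro u hu
    induction hu using Subgroup.closure_induction with
    | mem w hw =>
      obtain ⟨a, v, -, hval⟩ := hw
      rw [hval]
      exact det_sympTransvect b B a v (halt v)
    | one => simp
    | mul w₁ w₂ _ _ h₁ h₂ =>
      rw [Units.val_mul, ← LinearMap.det_toMatrix b, LinearMap.toMatrix_mul,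
        Matrix.det_mul, LinearMap.det_toMatrix, LinearMap.det_toMatrix, h₁, h₂, one_mul]
    | inv w _ h =>
      have hmul : LinearMap.det ((w : Module.End R V)) *
          LinearMap.det (((w⁻¹ : (Module.End R V)ˣ) : Module.End R V)) = 1 := by
        rw [← LinearMap.det_toMatrix b (w : Module.End R V),
          ← LinearMap.det_toMatrix b ((w⁻¹ : (Module.End R V)ˣ) : Module.End R V),
          ← Matrix.det_mul, ← LinearMap.toMatrix_mul, ← Units.val_mul, mul_inv_cancel,
          Units.val_one]
        simp
      rwa [h, one_mul] at hmul
  have hiff : (∀ x y, B ((g : Module.End R V) x) ((g : Module.End R V) y) = B x y) ↔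
      g ∈ Subgroup.closure (sympTransvSet B m) := by
    constructor
    · intro hpres
      exact mainInd B halt b hb1 hb2 hb3 m g hpres (fun i hi => absurd i.isLt (by omega))
    · intro hcl
      exact closure_le_sp B halt hcl
  exact ⟨hiff, fun hpres => hdet g (hiff.mp hpres)⟩
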